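/- Let T be the prefix of M_{n+1} of length t < q_{n+1} and write t = d₁ + d₂q₁ + ⋯ + d_{n+1}q_n in the Ostrowski numeration system in base θ. Then T = M_n^{d_{n+1}} M_{n−1}^{d_n} ⋯ M₀^{d₁}, i.e., the prefix factors as a product of decreasing standard words with exponents the Ostrowski digits of its length. -/

import Mathlib

/-- `m`-fold concatenation of a word. -/
def wpow (W : List ℕ) : ℕ → List ℕ
  | 0 => []
  | n + 1 => W ++ wpow W n

lemma wpow_length (W : List ℕ) (m : ℕ) : (wpow W m).length = m * W.length := by
  induction m with
  | zero => simp [wpow]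
  | succ m ih => simp [wpow, ih]; ring

lemma take_wpow_append (W X : List ℕ) :
    ∀ c m, c ≤ m → ∀ r,
      (wpow W m ++ X).take (c * W.length + r)
        = wpow W c ++ (wpow W (m - c) ++ X).take r := by
  intro c
  induction c with
  | zero => intro m _ r; simp [wpow]
  | succ c ih =>
    intro m hm r
    obtain ⟨m', rfl⟩ : ∃ m', m = m' + 1 := ⟨m - 1, by omega⟩
    have h1 : wpow W (m' + 1) ++ X = W ++ (wpow W m' ++ X) := by
      simp [wpow]
    have h2 : (c + 1) * W.length + r = W.length + (c * W.length + r) := by ring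
    rw [h1, h2, List.take_length_add_append, ih m' (by omega) r]
    simp [wpow, Nat.succ_sub_succ]

/-- Product formula for prefixes of standard words: the prefix of `M_{n+1}` of
length `t < q_{n+1}` equals `M_n^{d_{n+1}} M_{n−1}^{d_n} ⋯ M₀^{d₁}`, where the
`d_j` are the Ostrowski digits of `t`. -/
theorem prefix_product_formula (a : ℕ → ℕ) (ha : ∀ k : ℕ, 1 ≤ k → 1 ≤ a k)
    (q : ℕ → ℕ) (hq0 : q 0 = 1) (hq1 : q 1 = a 1)
    (hq : ∀ k : ℕ, 1 ≤ k → q (k + 1) = a (k + 1) * q k + q (k - 1))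
    (M : ℕ → List ℕ) (hM0 : M 0 = [0])
    (hM1 : M 1 = wpow [0] (a 1 - 1) ++ [1])
    (hM : ∀ k : ℕ, 1 ≤ k → M (k + 1) = wpow (M k) (a (k + 1)) ++ M (k - 1))
    (n t : ℕ) (htlt : t < q (n + 1))
    (d : ℕ → ℕ) (hd1 : d 1 < a 1)
    (hd : ∀ j : ℕ, 1 ≤ j → j ≤ n + 1 → d j ≤ a j)
    (hrule : ∀ j : ℕ, 1 ≤ j → j ≤ n → d (j + 1) = a (j + 1) → d j = 0)
    (htsum : t = ∑ j ∈ Finset.range (n + 1), d (j + 1) * q j) :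
    (M (n + 1)).take t
      = ((List.range (n + 1)).reverse.map (fun j => wpow (M j) (d (j + 1)))).flatten := by
  -- lengths of the standard words
  have hlen : ∀ k, (M k).length = q k := by
    intro k
    induction k using Nat.strong_induction_on with
    | _ k ih =>
      match k with
      | 0 => simp [hM0, hq0]
      | 1 =>
        have h1 := ha 1 le_rfl
        rw [hM1, hq1]
        simp [wpow_length]
        omega
      | (k + 2) =>
        rw [hM (k + 1) (by omega)]
        simp only [List.length_append, wpow_length, Nat.add_sub_cancel]
        rw [ih (k + 1) (by omega), ih k (by omega), hq (k + 1) (by omega)]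
        simp
  -- the Ostrowski sum is small
  have sum_lt : ∀ m, m ≤ n + 1 → ∑ j ∈ Finset.range m, d (j + 1) * q j < q m := by
    intro m
    induction m using Nat.strong_induction_on with
    | _ m ih =>
      match m with
      | 0 => intro _; simp [hq0]
      | 1 =>
        intro _
        simp [hq0, hq1]
        omega
      | (k + 2) =>
        intro hm
        rw [Finset.sum_range_succ, hq (k + 1) (by omega)]
        simp only [Nat.add_sub_cancel, show k + 1 + 1 = k + 2 from by omega]
        by_cases hcase : d (k + 2) = a (k + 2)
        · have hdk : d (k + 1) = 0 := hrule (k + 1) (by omega) (by omega) hcase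
          have hk : ∑ j ∈ Finset.range k, d (j + 1) * q j < q k :=
            ih k (by omega) (by omega)
          rw [Finset.sum_range_succ, hdk, hcase]
          omega
        · have hklt : ∑ j ∈ Finset.range (k + 1), d (j + 1) * q j < q (k + 1) :=
            ih (k + 1) (by omega) (by omega)
          have hdle : d (k + 2) ≤ a (k + 2) := hd (k + 2) (by omega) hm
          have : d (k + 2) * q (k + 1) ≤ (a (k + 2) - 1) * q (k + 1) :=
            Nat.mul_le_mul_right _ (by omega)
          have ha2 : 1 ≤ a (k + 2) := ha (k + 2) (by omega)
          have h3 : (a (k + 2) - 1) * q (k + 1) + q (k + 1) = a (k + 2) * q (k + 1) := by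
            obtain ⟨b, hb⟩ : ∃ b, a (k + 2) = b + 1 := ⟨a (k + 2) - 1, by omega⟩
            rw [hb]
            simp [Nat.add_mul]
          omega
  -- prefixes of successive standard words agree
  have take_succ : ∀ k r, r < q k → (M (k + 1)).take r = (M k).take r := by
    intro k r hr
    match k with
    | 0 =>
      have : r = 0 := by omega
      simp [this]
    | (k + 1) =>
      rw [hM (k + 1) (by omega)]
      have ha1 : 1 ≤ a (k + 2) := ha (k + 2) (by omega)
      obtain ⟨b, hb⟩ : ∃ b, a (k + 2) = b + 1 := ⟨a (k + 2) - 1, by omega⟩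
      rw [hb]
      have : wpow (M (k + 1)) (b + 1) ++ M (k + 1 - 1) =
          M (k + 1) ++ (wpow (M (k + 1)) b ++ M (k + 1 - 1)) := by
        simp [wpow]
      rw [this, List.take_append_of_le_length (by rw [hlen]; omega)]
  -- the key claim, by strong induction
  have key : ∀ m, m ≤ n + 1 →
      (M m).take (∑ j ∈ Finset.range m, d (j + 1) * q j)
        = ((List.range m).reverse.map (fun j => wpow (M j) (d (j + 1)))).flatten := by
    intro m
    induction m using Nat.strong_induction_on with
    | _ m ih =>
      match m with
      | 0 => intro _; simp
      | 1 =>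
        intro _
        have h1 := ha 1 le_rfl
        rw [hM1]
        have hs : ∑ j ∈ Finset.range 1, d (j + 1) * q j = d 1 * 1 + 0 := by
          simp [hq0]
        rw [hs]
        have := take_wpow_append [0] [1] (d 1) (a 1 - 1) (by omega) 0
        simp only [List.length_cons, List.length_nil, zero_add] at this
        rw [this]
        simp [hM0, List.range_succ]
      | (k + 2) =>
        intro hm
        have hr : ∑ j ∈ Finset.range (k + 1), d (j + 1) * q j < q (k + 1) :=
          sum_lt (k + 1) (by omega)
        have hc : d (k + 2) ≤ a (k + 2) := hd (k + 2) (by omega) hm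
        rw [Finset.sum_range_succ, hM (k + 1) (by omega)]
        simp only [Nat.add_sub_cancel]
        have harith : ∑ j ∈ Finset.range (k + 1), d (j + 1) * q j + d (k + 2) * q (k + 1)
            = d (k + 2) * (M (k + 1)).length + ∑ j ∈ Finset.range (k + 1), d (j + 1) * q j := by
          rw [hlen]; ring
        rw [harith, take_wpow_append (M (k + 1)) (M k) (d (k + 2)) (a (k + 2)) hc]
        have hR : ((List.range (k + 2)).reverse.map
              (fun j => wpow (M j) (d (j + 1)))).flatten
            = wpow (M (k + 1)) (d (k + 2)) ++
              ((List.range (k + 1)).reverse.map (fun j => wpow (M j) (d (j + 1)))).flatten := by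
          rw [List.range_succ]
          simp
        rw [hR]
        congr 1
        have hmain : (wpow (M (k + 1)) (a (k + 2) - d (k + 2)) ++ M k).take
              (∑ j ∈ Finset.range (k + 1), d (j + 1) * q j)
            = (M (k + 1)).take (∑ j ∈ Finset.range (k + 1), d (j + 1) * q j) := by
          by_cases hcase : d (k + 2) = a (k + 2)
          · have hz : a (k + 2) - d (k + 2) = 0 := by omega
            rw [hz]
            simp only [wpow, List.nil_append]
            have hdk : d (k + 1) = 0 := hrule (k + 1) (by omega) (by omega) hcase
            have hrk : ∑ j ∈ Finset.range (k + 1), d (j + 1) * q j < q k := by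
              rw [Finset.sum_range_succ, hdk]
              simpa using sum_lt k (by omega)
            rw [take_succ k _ hrk]
          · obtain ⟨b, hb⟩ : ∃ b, a (k + 2) - d (k + 2) = b + 1 := ⟨a (k + 2) - d (k + 2) - 1, by omega⟩
            rw [hb]
            have hsplit : wpow (M (k + 1)) (b + 1) ++ M k
                = M (k + 1) ++ (wpow (M (k + 1)) b ++ M k) := by
              simp [wpow]
            rw [hsplit, List.take_append_of_le_length (by rw [hlen]; omega)]
        rw [hmain, ih (k + 1) (by omega) (by omega)]
  rw [htsum]
  exact key (n + 1) le_rfl
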